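/- For the generalized Cantor ladder, E(λ) = H(λ)λ^α e^λ + O(1) as λ → ∞, where η = 1/ρ_m, α = log_η Δ_{2m−1} < 0, and H(λ) = Φ(log_η λ) for some 1-periodic function Φ. -/

import Mathlib

open Set Finset Filter Asymptotics

set_option maxHeartbeats 1000000 in
theorem cantorLadder_E_first_term
    (m : ℕ) (a b ρ : ℕ → ℝ) (C : ℝ → ℝ)
    (hm : 2 ≤ m)
    (ha0 : a 0 = 0) (hbm : b (m - 1) = 1)
    (hab : ∀ k < m, a k < b k)
    (horder : ∀ k, k + 1 < m → b k ≤ a (k + 1))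
    (hρpos : ∀ k < m, 0 < ρ k)
    (hρsum : ∑ j ∈ Finset.range m, ρ j = 1)
    (hcont : ContinuousOn C (Set.Icc 0 1))
    (hstep : ∀ k < m, ∀ t ∈ Set.Icc (a k) (b k),
      C t = (∑ j ∈ Finset.range k, ρ j) + ρ k * C ((t - a k) / (b k - a k)))
    (hgap : ∀ k, k + 1 < m → ∀ t ∈ Set.Icc (b k) (a (k + 1)),
      C t = ∑ j ∈ Finset.range (k + 1), ρ j) :
    Real.log (b (m - 1) - a (m - 1)) / Real.log (1 / ρ (m - 1)) < 0 ∧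
    ∃ Φ : ℝ → ℝ, (∀ x, Φ (x + 1) = Φ x) ∧
      (fun lam => (∫ t in (0:ℝ)..1, Real.exp (lam * C t)) -
          Φ (Real.log lam / Real.log (1 / ρ (m - 1))) *
            lam ^ (Real.log (b (m - 1) - a (m - 1)) / Real.log (1 / ρ (m - 1))) *
            Real.exp lam)
        =O[atTop] fun _ => (1 : ℝ) := by
  classical
  obtain ⟨n, rfl⟩ : ∃ n, m = n + 2 := ⟨m - 2, by omega⟩
  have hidx : n + 2 - 1 = n + 1 := rfl
  rw [hidx] at hbm
  simp only [hidx]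
  rw [hbm]
  -- basic facts about ρ
  have hρnn : ∀ i ∈ Finset.range (n + 2), 0 ≤ ρ i :=
    fun i hi => (hρpos i (Finset.mem_range.mp hi)).le
  have hρlt1 : ∀ k < n + 2, ρ k < 1 := by
    intro k hk
    obtain ⟨j, hj, hjk⟩ : ∃ j, j < n + 2 ∧ j ≠ k := by
      rcases Nat.eq_zero_or_pos k with h | h
      · exact ⟨1, by omega, by omega⟩
      · exact ⟨0, by omega, by omega⟩
    have hpair : ρ k + ρ j ≤ 1 := by
      rw [← hρsum]
      calc ρ k + ρ j = ∑ i ∈ ({k, j} : Finset ℕ), ρ i := (Finset.sum_pair (Ne.symm hjk)).symm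
        _ ≤ ∑ i ∈ Finset.range (n + 2), ρ i := by
            apply Finset.sum_le_sum_of_subset_of_nonneg
            · intro i hi
              simp only [Finset.mem_insert, Finset.mem_singleton] at hi
              rcases hi with rfl | rfl <;> simp [Finset.mem_range, hk, hj]
            · intro i hi _; exact hρnn i hi
    linarith [hρpos j hj]
  have hpartial : ∀ k, k ≤ n + 2 → ∑ j ∈ Finset.range k, ρ j ≤ 1 := by
    intro k hk
    rw [← hρsum]
    exact Finset.sum_le_sum_of_subset_of_nonneg (Finset.range_subset_range.mpr hk)
      (fun i hi _ => hρnn i hi)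
  -- a is nonnegative
  have ha_nonneg : ∀ k, k < n + 2 → 0 ≤ a k := by
    intro k
    induction k with
    | zero => intro _; simp [ha0]
    | succ k ih =>
      intro hk
      have h1 := ih (by omega)
      have h2 := hab k (by omega)
      have h3 := horder k hk
      linarith
  have hA0 : 0 < a (n + 1) := by
    have h1 := horder n (by omega)
    have h2 := hab n (by omega)
    have h3 := ha_nonneg n (by omega)
    linarith
  have hA1 : a (n + 1) < 1 := by
    have := hab (n + 1) (by omega); rw [hbm] at this; exact this
  have hΔ0 : (0:ℝ) < 1 - a (n + 1) := by linarith
  have hr0 : 0 < ρ (n + 1) := hρpos (n + 1) (by omega)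
  have hr1 : ρ (n + 1) < 1 := hρlt1 (n + 1) (by omega)
  have hs : ∑ j ∈ Finset.range (n + 1), ρ j = 1 - ρ (n + 1) := by
    have := hρsum; rw [Finset.sum_range_succ] at this; linarith
  -- covering of [0,1] by the steps and gaps
  have cover : ∀ t ∈ Icc (0:ℝ) 1, ∃ k, k < n + 2 ∧
      (t ∈ Icc (a k) (b k) ∨ (k + 1 < n + 2 ∧ t ∈ Icc (b k) (a (k + 1)))) := by
    intro t ht
    set P : ℕ → Prop := fun j => a j ≤ t with hP
    have hP0 : P 0 := by rw [hP]; simp only [ha0]; exact ht.1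
    have hkle : Nat.findGreatest P (n + 1) ≤ n + 1 := Nat.findGreatest_le _
    have hak : a (Nat.findGreatest P (n + 1)) ≤ t := Nat.findGreatest_spec (Nat.zero_le _) hP0
    by_cases hbk : t ≤ b (Nat.findGreatest P (n + 1))
    · exact ⟨_, by omega, Or.inl ⟨hak, hbk⟩⟩
    · push_neg at hbk
      have hkn : Nat.findGreatest P (n + 1) ≠ n + 1 := by
        intro h; rw [h, hbm] at hbk; exact absurd ht.2 (not_le.mpr hbk)
      have hk1 : Nat.findGreatest P (n + 1) + 1 ≤ n + 1 := by omega
      have hnp : ¬ P (Nat.findGreatest P (n + 1) + 1) :=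
        Nat.findGreatest_is_greatest (Nat.lt_succ_self _) hk1
      have : t ≤ a (Nat.findGreatest P (n + 1) + 1) := le_of_not_ge hnp
      exact ⟨_, by omega, Or.inr ⟨by omega, hbk.le, this⟩⟩
  -- C is bounded between 0 and 1
  have hC1 : ∀ t ∈ Icc (0:ℝ) 1, C t ≤ 1 := by
    obtain ⟨t₀, ht₀, hmax⟩ := isCompact_Icc.exists_isMaxOn
      (⟨0, by constructor <;> norm_num⟩ : (Icc (0:ℝ) 1).Nonempty) hcont
    intro t ht
    have hle : C t ≤ C t₀ := hmax ht
    suffices h : C t₀ ≤ 1 by linarith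
    obtain ⟨k, hk, hcase⟩ := cover t₀ ht₀
    rcases hcase with hintv | ⟨hk1, hgm⟩
    · have hba : 0 < b k - a k := sub_pos.mpr (hab k hk)
      have hu : (t₀ - a k) / (b k - a k) ∈ Icc (0:ℝ) 1 :=
        ⟨div_nonneg (by linarith [hintv.1]) hba.le,
         (div_le_one hba).mpr (by linarith [hintv.2])⟩
      have hCu : C ((t₀ - a k) / (b k - a k)) ≤ C t₀ := hmax hu
      have heq := hstep k hk t₀ hintv
      have hk1' := hpartial (k + 1) (by omega)
      rw [Finset.sum_range_succ] at hk1'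
      have hρk := hρpos k hk
      have hρk1 := hρlt1 k hk
      nlinarith [mul_le_mul_of_nonneg_left hCu hρk.le]
    · rw [hgap k hk1 t₀ hgm]; exact hpartial (k + 1) (by omega)
  have hC0 : ∀ t ∈ Icc (0:ℝ) 1, 0 ≤ C t := by
    obtain ⟨t₀, ht₀, hmin⟩ := isCompact_Icc.exists_isMinOn
      (⟨0, by constructor <;> norm_num⟩ : (Icc (0:ℝ) 1).Nonempty) hcont
    intro t ht
    have hle : C t₀ ≤ C t := hmin ht
    suffices h : 0 ≤ C t₀ by linarith
    obtain ⟨k, hk, hcase⟩ := cover t₀ ht₀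
    rcases hcase with hintv | ⟨hk1, hgm⟩
    · have hba : 0 < b k - a k := sub_pos.mpr (hab k hk)
      have hu : (t₀ - a k) / (b k - a k) ∈ Icc (0:ℝ) 1 :=
        ⟨div_nonneg (by linarith [hintv.1]) hba.le,
         (div_le_one hba).mpr (by linarith [hintv.2])⟩
      have hCu : C t₀ ≤ C ((t₀ - a k) / (b k - a k)) := hmin hu
      have heq := hstep k hk t₀ hintv
      have hsk : 0 ≤ ∑ j ∈ Finset.range k, ρ j :=
        Finset.sum_nonneg (fun i hi => (hρpos i (by
          have := Finset.mem_range.mp hi; omega)).le)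
      have hρk := hρpos k hk
      have hρk1 := hρlt1 k hk
      nlinarith [mul_le_mul_of_nonneg_left hCu hρk.le]
    · rw [hgap k hk1 t₀ hgm]
      exact Finset.sum_nonneg (fun i hi => (hρpos i (by
        have := Finset.mem_range.mp hi; omega)).le)
  have hC00 : C 0 = 0 := by
    have hb0 : 0 < b 0 := by have := hab 0 (by omega); linarith [this, ha0.le]
    have h := hstep 0 (by omega) 0 ⟨ha0.le, by linarith⟩
    rw [ha0] at h
    simp only [Finset.sum_range_zero, sub_zero, zero_sub, zero_div, zero_add, neg_div,
      neg_zero, sub_self] at h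
    have hρ0 := hρlt1 0 (by omega)
    have : C 0 * (1 - ρ 0) = 0 := by linear_combination h
    rcases mul_eq_zero.mp this with h' | h'
    · exact h'
    · linarith
  have hCθ : ∀ t ∈ Icc (0:ℝ) (a (n + 1)), C t ≤ 1 - ρ (n + 1) := by
    intro t ht
    have ht1 : t ∈ Icc (0:ℝ) 1 := ⟨ht.1, le_trans ht.2 hA1.le⟩
    obtain ⟨k, hk, hcase⟩ := cover t ht1
    rcases hcase with hintv | ⟨hk1, hgm⟩
    · by_cases hk' : k ≤ n
      · have hba : 0 < b k - a k := sub_pos.mpr (hab k hk)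
        have hu : (t - a k) / (b k - a k) ∈ Icc (0:ℝ) 1 :=
          ⟨div_nonneg (by linarith [hintv.1]) hba.le,
           (div_le_one hba).mpr (by linarith [hintv.2])⟩
        have hCu : C ((t - a k) / (b k - a k)) ≤ 1 := hC1 _ hu
        have heq := hstep k hk t hintv
        have hmono : ∑ j ∈ Finset.range (k + 1), ρ j ≤ ∑ j ∈ Finset.range (n + 1), ρ j :=
          Finset.sum_le_sum_of_subset_of_nonneg (Finset.range_subset_range.mpr (by omega))
            (fun i hi _ => (hρpos i (by have := Finset.mem_range.mp hi; omega)).le)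
        rw [Finset.sum_range_succ] at hmono
        rw [hs] at hmono
        have hρk := hρpos k hk
        nlinarith [mul_le_mul_of_nonneg_left hCu hρk.le]
      · have hkeq : k = n + 1 := by omega
        subst hkeq
        have ht' : t = a (n + 1) := le_antisymm ht.2 hintv.1
        have heq := hstep (n + 1) (by omega) t hintv
        rw [ht'] at heq
        rw [show (a (n+1) - a (n+1)) / (b (n+1) - a (n+1)) = 0 by rw [sub_self, zero_div]] at heq
        rw [hC00, hs] at heq
        rw [ht']
        linarith [heq]
    · rw [hgap k hk1 t hgm]
      have hmono : ∑ j ∈ Finset.range (k + 1), ρ j ≤ ∑ j ∈ Finset.range (n + 1), ρ j :=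
        Finset.sum_le_sum_of_subset_of_nonneg (Finset.range_subset_range.mpr (by omega))
          (fun i hi _ => (hρpos i (by have := Finset.mem_range.mp hi; omega)).le)
      rw [hs] at hmono
      exact hmono
  -- integrability
  have hcontexp : ∀ μ : ℝ, ContinuousOn (fun t => Real.exp (μ * C t)) (Icc 0 1) :=
    fun μ => Real.continuous_exp.comp_continuousOn (continuousOn_const.mul hcont)
  have hint : ∀ (μ x y : ℝ), x ∈ Icc (0:ℝ) 1 → y ∈ Icc (0:ℝ) 1 →
      IntervalIntegrable (fun t => Real.exp (μ * C t)) MeasureTheory.volume x y := by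
    intro μ x y hx hy
    apply ContinuousOn.intervalIntegrable
    apply (hcontexp μ).mono
    rw [show Icc (0:ℝ) 1 = Set.uIcc 0 1 from (Set.uIcc_of_le (by norm_num)).symm] at hx hy ⊢
    exact Set.uIcc_subset_uIcc hx hy
  -- the scaling identity on the last step
  have hsub : ∀ μ : ℝ,
      (∫ t in (a (n+1))..(1:ℝ), Real.exp (μ * C t))
        = (1 - a (n+1)) * Real.exp (μ * (1 - ρ (n+1))) *
            ∫ t in (0:ℝ)..1, Real.exp ((ρ (n+1) * μ) * C t) := by
    intro μ
    have h1 : ∀ t ∈ Set.uIcc (a (n+1)) (1:ℝ),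
        Real.exp (μ * C t) = Real.exp (μ * (1 - ρ (n+1))) *
          (fun u => Real.exp ((ρ (n+1) * μ) * C u)) ((t - a (n+1)) / (1 - a (n+1))) := by
      intro t ht
      rw [Set.uIcc_of_le hA1.le] at ht
      have heq := hstep (n+1) (by omega) t (by rw [hbm]; exact ht)
      rw [hbm, hs] at heq
      simp only []
      rw [heq, show μ * ((1 - ρ (n+1)) + ρ (n+1) * C ((t - a (n+1)) / (1 - a (n+1))))
          = μ * (1 - ρ (n+1)) + (ρ (n+1) * μ) * C ((t - a (n+1)) / (1 - a (n+1))) from by ring,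
        Real.exp_add]
    rw [intervalIntegral.integral_congr h1, intervalIntegral.integral_const_mul]
    rw [intervalIntegral.integral_comp_sub_right
      (fun s => (fun u => Real.exp ((ρ (n+1) * μ) * C u)) (s / (1 - a (n+1)))) (a (n+1))]
    rw [intervalIntegral.integral_comp_div (fun u => Real.exp ((ρ (n+1) * μ) * C u)) hΔ0.ne']
    rw [sub_self, zero_div, div_self hΔ0.ne', smul_eq_mul]
    ring
  set E : ℝ → ℝ := fun μ => ∫ t in (0:ℝ)..1, Real.exp (μ * C t) with hE
  have hmem0 : (0:ℝ) ∈ Icc (0:ℝ) 1 := by constructor <;> norm_num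
  have hmem1 : (1:ℝ) ∈ Icc (0:ℝ) 1 := by constructor <;> norm_num
  have hmemA : a (n+1) ∈ Icc (0:ℝ) 1 := ⟨hA0.le, hA1.le⟩
  have hsplit : ∀ μ : ℝ,
      E μ = (∫ t in (0:ℝ)..(a (n+1)), Real.exp (μ * C t)) +
        (1 - a (n+1)) * Real.exp (μ * (1 - ρ (n+1))) * E (ρ (n+1) * μ) := by
    intro μ
    simp only [hE]
    rw [← hsub μ]
    rw [intervalIntegral.integral_add_adjacent_intervals
      (hint μ 0 (a (n+1)) hmem0 hmemA) (hint μ (a (n+1)) 1 hmemA hmem1)]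
  set S : ℝ → ℝ := fun μ =>
    E μ - (1 - a (n+1)) * Real.exp (μ * (1 - ρ (n+1))) * E (ρ (n+1) * μ) with hSdef
  have hSint : ∀ μ : ℝ, S μ = ∫ t in (0:ℝ)..(a (n+1)), Real.exp (μ * C t) := by
    intro μ
    simp only [hSdef]
    have := hsplit μ
    linarith
  have hSnn : ∀ μ : ℝ, 0 ≤ S μ := by
    intro μ
    rw [hSint]
    exact intervalIntegral.integral_nonneg hA0.le (fun u _ => (Real.exp_pos _).le)
  have hSle : ∀ μ : ℝ, 0 ≤ μ → S μ ≤ Real.exp (μ * (1 - ρ (n+1))) := by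
    intro μ hμ
    rw [hSint]
    calc (∫ t in (0:ℝ)..(a (n+1)), Real.exp (μ * C t))
        ≤ ∫ _ in (0:ℝ)..(a (n+1)), Real.exp (μ * (1 - ρ (n+1))) := by
          apply intervalIntegral.integral_mono_on hA0.le
            (hint μ 0 (a (n+1)) hmem0 hmemA) intervalIntegrable_const
          intro t ht
          exact Real.exp_le_exp.mpr (mul_le_mul_of_nonneg_left (hCθ t ht) hμ)
      _ = a (n+1) * Real.exp (μ * (1 - ρ (n+1))) := by
          rw [intervalIntegral.integral_const, smul_eq_mul, sub_zero]
      _ ≤ 1 * Real.exp (μ * (1 - ρ (n+1))) :=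
          mul_le_mul_of_nonneg_right hA1.le (Real.exp_pos _).le
      _ = Real.exp (μ * (1 - ρ (n+1))) := one_mul _
  -- η facts
  have hη1 : 1 < 1 / ρ (n+1) := by rw [one_lt_div hr0]; exact hr1
  have hη0 : (0:ℝ) < 1 / ρ (n+1) := by positivity
  have hrη : ρ (n+1) * (1 / ρ (n+1)) = 1 := by field_simp
  have hηj : ∀ j : ℕ, 1 ≤ (1 / ρ (n+1)) ^ j := fun j => one_le_pow₀ hη1.le
  have hpowr : ∀ j : ℕ, ρ (n+1) * (1 / ρ (n+1)) ^ (j + 1) = (1 / ρ (n+1)) ^ j := by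
    intro j
    rw [pow_succ]
    calc ρ (n+1) * ((1 / ρ (n+1)) ^ j * (1 / ρ (n+1)))
        = (1 / ρ (n+1)) ^ j * (ρ (n+1) * (1 / ρ (n+1))) := by ring
      _ = (1 / ρ (n+1)) ^ j := by rw [hrη, mul_one]
  -- the comparison series is summable
  have hgsum : ∀ μ : ℝ, 0 < μ →
      Summable (fun j : ℕ => (1 - a (n+1))⁻¹ ^ (j+1) *
        Real.exp (μ * (1 - (1 / ρ (n+1)) ^ j))) := by
    intro μ hμ
    apply summable_of_ratio_norm_eventually_le (r := 1/2) (by norm_num)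
    have htend : Tendsto (fun j : ℕ => (1 - a (n+1))⁻¹ *
        Real.exp (-(μ * (1 / ρ (n+1) - 1)) * (1 / ρ (n+1)) ^ j)) atTop (nhds 0) := by
      have h1 : Tendsto (fun j : ℕ => (1 / ρ (n+1)) ^ j) atTop atTop :=
        tendsto_pow_atTop_atTop_of_one_lt hη1
      have h2 : Tendsto (fun j : ℕ => -(μ * (1 / ρ (n+1) - 1)) * (1 / ρ (n+1)) ^ j)
          atTop atBot := by
        apply Tendsto.const_mul_atTop_of_neg _ h1
        have : 0 < μ * (1 / ρ (n+1) - 1) := by nlinarith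
        linarith
      have h3 := Real.tendsto_exp_atBot.comp h2
      have h4 := h3.const_mul ((1 - a (n+1))⁻¹)
      simpa using h4
    have hev : ∀ᶠ j : ℕ in atTop, (1 - a (n+1))⁻¹ *
        Real.exp (-(μ * (1 / ρ (n+1) - 1)) * (1 / ρ (n+1)) ^ j) < 1/2 :=
      htend.eventually_lt_const (by norm_num)
    filter_upwards [hev] with j hj
    have key : (1 - a (n+1))⁻¹ ^ (j+1+1) * Real.exp (μ * (1 - (1 / ρ (n+1)) ^ (j+1)))
        = ((1 - a (n+1))⁻¹ * Real.exp (-(μ * (1 / ρ (n+1) - 1)) * (1 / ρ (n+1)) ^ j)) *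
          ((1 - a (n+1))⁻¹ ^ (j+1) * Real.exp (μ * (1 - (1 / ρ (n+1)) ^ j))) := by
      rw [show μ * (1 - (1 / ρ (n+1)) ^ (j+1))
          = (-(μ * (1 / ρ (n+1) - 1)) * (1 / ρ (n+1)) ^ j) + μ * (1 - (1 / ρ (n+1)) ^ j) from by
        rw [pow_succ]; ring, Real.exp_add, pow_succ]
      ring
    rw [Real.norm_eq_abs, Real.norm_eq_abs, key, abs_mul]
    have h2 : |(1 - a (n+1))⁻¹ * Real.exp (-(μ * (1 / ρ (n+1) - 1)) * (1 / ρ (n+1)) ^ j)|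
        ≤ 1/2 := by
      rw [abs_of_pos (mul_pos (inv_pos.mpr hΔ0) (Real.exp_pos _))]
      exact hj.le
    exact mul_le_mul_of_nonneg_right h2 (abs_nonneg _)
  -- the correction series
  set f : ℕ → ℝ → ℝ := fun j μ => (1 - a (n+1))⁻¹ ^ (j+1) *
    Real.exp (μ * (1 - (1 / ρ (n+1)) ^ (j+1))) * S ((1 / ρ (n+1)) ^ (j+1) * μ) with hfdef
  have hfnn : ∀ (j : ℕ) (μ : ℝ), 0 ≤ f j μ := by
    intro j μ
    simp only [hfdef]
    exact mul_nonneg (mul_nonneg (pow_nonneg (inv_nonneg.mpr hΔ0.le) _)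
      (Real.exp_pos _).le) (hSnn _)
  have hfle : ∀ (j : ℕ) (μ : ℝ), 0 < μ →
      f j μ ≤ (1 - a (n+1))⁻¹ ^ (j+1) * Real.exp (μ * (1 - (1 / ρ (n+1)) ^ j)) := by
    intro j μ hμ
    simp only [hfdef]
    have hν : 0 < (1 / ρ (n+1)) ^ (j+1) * μ := by positivity
    have h1 : S ((1 / ρ (n+1)) ^ (j+1) * μ)
        ≤ Real.exp (((1 / ρ (n+1)) ^ (j+1) * μ) * (1 - ρ (n+1))) := hSle _ hν.le
    calc (1 - a (n+1))⁻¹ ^ (j+1) * Real.exp (μ * (1 - (1 / ρ (n+1)) ^ (j+1))) *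
          S ((1 / ρ (n+1)) ^ (j+1) * μ)
        ≤ (1 - a (n+1))⁻¹ ^ (j+1) * Real.exp (μ * (1 - (1 / ρ (n+1)) ^ (j+1))) *
          Real.exp (((1 / ρ (n+1)) ^ (j+1) * μ) * (1 - ρ (n+1))) := by
          apply mul_le_mul_of_nonneg_left h1
          exact mul_nonneg (pow_nonneg (inv_nonneg.mpr hΔ0.le) _) (Real.exp_pos _).le
      _ = (1 - a (n+1))⁻¹ ^ (j+1) * Real.exp (μ * (1 - (1 / ρ (n+1)) ^ j)) := by
          rw [mul_assoc, ← Real.exp_add]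
          congr 2
          linear_combination (-μ) * hpowr j
  have hfsum : ∀ μ : ℝ, 0 < μ → Summable (fun j => f j μ) := fun μ hμ =>
    Summable.of_nonneg_of_le (fun j => hfnn j μ) (fun j => hfle j μ hμ) (hgsum μ hμ)
  set T : ℝ → ℝ := fun μ => ∑' j, f j μ with hTdef
  have hTnn : ∀ μ : ℝ, 0 ≤ T μ := fun μ => tsum_nonneg (fun j => hfnn j μ)
  -- the inhomogeneous functional equation for T
  have hTeq : ∀ μ : ℝ, 0 < μ →
      (1 - a (n+1)) * Real.exp (μ * (1 - ρ (n+1))) * T (ρ (n+1) * μ) = S μ + T μ := by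
    intro μ hμ
    have hrμ : 0 < ρ (n+1) * μ := mul_pos hr0 hμ
    set h : ℕ → ℝ := fun j => (1 - a (n+1))⁻¹ ^ j *
      Real.exp (μ * (1 - (1 / ρ (n+1)) ^ j)) * S ((1 / ρ (n+1)) ^ j * μ) with hhdef
    have hshift : (fun j : ℕ => h (j + 1)) = fun j => f j μ := by
      funext j; simp only [hhdef, hfdef]
    have hhsum : Summable h := by
      rw [← summable_nat_add_iff 1, hshift]
      exact hfsum μ hμ
    have lhs_term : ∀ j : ℕ,
        (1 - a (n+1)) * Real.exp (μ * (1 - ρ (n+1))) * f j (ρ (n+1) * μ) = h j := by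
      intro j
      simp only [hfdef, hhdef]
      have e1 : (1 / ρ (n+1)) ^ (j+1) * (ρ (n+1) * μ) = (1 / ρ (n+1)) ^ j * μ := by
        linear_combination μ * hpowr j
      rw [e1]
      have e2 : Real.exp (μ * (1 - ρ (n+1))) *
          Real.exp ((ρ (n+1) * μ) * (1 - (1 / ρ (n+1)) ^ (j+1)))
          = Real.exp (μ * (1 - (1 / ρ (n+1)) ^ j)) := by
        rw [← Real.exp_add]
        congr 1
        linear_combination (-μ) * hpowr j
      have e3 : (1 - a (n+1)) * (1 - a (n+1))⁻¹ ^ (j+1) = (1 - a (n+1))⁻¹ ^ j := by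
        rw [pow_succ]
        field_simp
      rw [← e2, ← e3]
      ring
    calc (1 - a (n+1)) * Real.exp (μ * (1 - ρ (n+1))) * T (ρ (n+1) * μ)
        = ∑' j, (1 - a (n+1)) * Real.exp (μ * (1 - ρ (n+1))) * f j (ρ (n+1) * μ) := by
          simp only [hTdef]
          exact tsum_mul_left.symm
      _ = ∑' j, h j := tsum_congr lhs_term
      _ = h 0 + ∑' j, h (j + 1) := Summable.tsum_eq_zero_add hhsum
      _ = S μ + T μ := by
          have h0 : h 0 = S μ := by simp [hhdef]
          rw [h0, hshift]
  -- W := E + T solves the homogeneous equation exactly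
  have hW : ∀ μ : ℝ, 0 < μ → E μ + T μ
      = (1 - a (n+1)) * Real.exp (μ * (1 - ρ (n+1))) * (E (ρ (n+1) * μ) + T (ρ (n+1) * μ)) := by
    intro μ hμ
    have h2 := hTeq μ hμ
    simp only [hSdef] at h2
    nlinarith [h2]
  -- uniform bound for T on [1, ∞)
  have hBsum : Summable (fun j : ℕ => (1 - a (n+1))⁻¹ ^ (j+1) *
      Real.exp ((1:ℝ) * (1 - (1 / ρ (n+1)) ^ j))) := hgsum 1 one_pos
  have hTle : ∀ μ : ℝ, 1 ≤ μ → T μ ≤ ∑' j : ℕ, (1 - a (n+1))⁻¹ ^ (j+1) *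
      Real.exp ((1:ℝ) * (1 - (1 / ρ (n+1)) ^ j)) := by
    intro μ hμ
    simp only [hTdef]
    apply Summable.tsum_le_tsum _ (hfsum μ (by linarith)) hBsum
    intro j
    calc f j μ ≤ (1 - a (n+1))⁻¹ ^ (j+1) * Real.exp (μ * (1 - (1 / ρ (n+1)) ^ j)) :=
          hfle j μ (by linarith)
      _ ≤ (1 - a (n+1))⁻¹ ^ (j+1) * Real.exp ((1:ℝ) * (1 - (1 / ρ (n+1)) ^ j)) := by
          apply mul_le_mul_of_nonneg_left _ (pow_nonneg (inv_nonneg.mpr hΔ0.le) _)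
          apply Real.exp_le_exp.mpr
          nlinarith [hηj j]
  -- the exponent and the periodic function
  have hlogΔ : Real.log (1 - a (n+1)) < 0 := Real.log_neg hΔ0 (by linarith)
  have hlogη : 0 < Real.log (1 / ρ (n+1)) := Real.log_pos hη1
  set α : ℝ := Real.log (1 - a (n+1)) / Real.log (1 / ρ (n+1)) with hαdef
  have hηα : (1 / ρ (n+1)) ^ α = 1 - a (n+1) := by
    rw [hαdef, Real.rpow_def_of_pos hη0, mul_comm, div_mul_cancel₀ _ hlogη.ne']
    exact Real.exp_log hΔ0
  set Φ : ℝ → ℝ := fun x => (E ((1 / ρ (n+1)) ^ x) + T ((1 / ρ (n+1)) ^ x)) *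
    ((1 / ρ (n+1)) ^ x) ^ (-α) * Real.exp (-((1 / ρ (n+1)) ^ x)) with hΦdef
  have hΦper : ∀ x : ℝ, Φ (x + 1) = Φ x := by
    intro x
    have hμ : (0:ℝ) < (1 / ρ (n+1)) ^ x := Real.rpow_pos_of_pos hη0 x
    have h1 : (1 / ρ (n+1)) ^ (x + 1) = (1 / ρ (n+1)) * (1 / ρ (n+1)) ^ x := by
      rw [Real.rpow_add hη0, Real.rpow_one, mul_comm]
    have hrημ : ρ (n+1) * ((1 / ρ (n+1)) * (1 / ρ (n+1)) ^ x) = (1 / ρ (n+1)) ^ x := by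
      rw [← mul_assoc, hrη, one_mul]
    simp only [hΦdef, h1]
    rw [hW ((1 / ρ (n+1)) * (1 / ρ (n+1)) ^ x) (by positivity), hrημ]
    rw [Real.mul_rpow hη0.le hμ.le, Real.rpow_neg hη0.le, hηα]
    have hexp : Real.exp (((1 / ρ (n+1)) * (1 / ρ (n+1)) ^ x) * (1 - ρ (n+1))) *
        Real.exp (-((1 / ρ (n+1)) * (1 / ρ (n+1)) ^ x)) = Real.exp (-((1 / ρ (n+1)) ^ x)) := by
      rw [← Real.exp_add]
      congr 1
      linear_combination -hrημ
    rw [← hexp]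
    field_simp
  refine ⟨div_neg_of_neg_of_pos hlogΔ hlogη, Φ, hΦper, ?_⟩
  rw [Asymptotics.isBigO_iff]
  refine ⟨∑' j : ℕ, (1 - a (n+1))⁻¹ ^ (j+1) *
      Real.exp ((1:ℝ) * (1 - (1 / ρ (n+1)) ^ j)), ?_⟩
  filter_upwards [eventually_ge_atTop (1:ℝ)] with lam hlam
  have hlam0 : (0:ℝ) < lam := by linarith
  have hηL : (1 / ρ (n+1)) ^ (Real.log lam / Real.log (1 / ρ (n+1))) = lam := by
    rw [Real.rpow_def_of_pos hη0, mul_comm, div_mul_cancel₀ _ hlogη.ne']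
    exact Real.exp_log hlam0
  have hΦval : Φ (Real.log lam / Real.log (1 / ρ (n+1))) * lam ^ α * Real.exp lam
      = E lam + T lam := by
    simp only [hΦdef, hηL]
    rw [Real.rpow_neg hlam0.le, Real.exp_neg]
    field_simp
  have hElam : E lam = ∫ t in (0:ℝ)..1, Real.exp (lam * C t) := by rw [hE]
  show ‖(∫ t in (0:ℝ)..1, Real.exp (lam * C t)) -
      Φ (Real.log lam / Real.log (1 / ρ (n+1))) * lam ^ α * Real.exp lam‖
    ≤ (∑' j : ℕ, (1 - a (n+1))⁻¹ ^ (j+1) *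
      Real.exp ((1:ℝ) * (1 - (1 / ρ (n+1)) ^ j))) * ‖(1:ℝ)‖
  rw [hΦval, ← hElam]
  rw [show E lam - (E lam + T lam) = -(T lam) from by ring]
  rw [norm_neg, Real.norm_eq_abs, abs_of_nonneg (hTnn lam), norm_one, mul_one]
  exact hTle lam hlam
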